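/- (Theorem 4, O(1/N) ergodic rate of the fair Condat–Vũ method.) Let E be a real inner product space, f₁ : E → ℝ convex and differentiable with L-Lipschitz continuous gradient (L > 0), h : E → ℝ and φ : E → ℝ convex, and σ, τ > 0 with στ < 1 − σL. Given x⁰, y⁰ ∈ E, define for k ≥ 0: x̂ᵏ⁺¹ minimizes x ↦ h(x) + (1/(2σ))‖x − (xᵏ − σ(yᵏ + ∇f₁(xᵏ)))‖²; yᵏ⁺¹ minimizes y ↦ φ(y) + (1/(2τ))‖y − (yᵏ + τ(2x̂ᵏ⁺¹ − xᵏ))‖²; xᵏ⁺¹ := x̂ᵏ⁺¹. Let (x*, y*) be a saddle point of L(x,y) = f₁(x) + h(x) + ⟨x,y⟩ − φ(y), and for N ≥ 1 set x̄_N := (1/N)·Σ_{k=1}^{N} x̂ᵏ and ȳ_N := (1/N)·Σ_{k=1}^{N} yᵏ. Then [f₁(x̄_N) + h(x̄_N) + φ(ȳ_N)] − [f₁(x*) + h(x*) + φ(y*)] − (⟨x* − x̄_N, y*⟩ − ⟨y* − ȳ_N, x*⟩) ≤ (1/(2N))·[(1/σ)‖x⁰ − x*‖² − 2⟨x⁰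 − x*, y⁰ − y*⟩ + (1/τ)‖y⁰ − y*‖²]. -/

import Mathlib

open RealInnerProductSpace

lemma prox_subgrad {E : Type*} [NormedAddCommGroup E] [InnerProductSpace ℝ E]
    (g : E → ℝ) (hg : ConvexOn ℝ Set.univ g) (σ : ℝ) (hσ : 0 < σ) (p a : E)
    (hmin : ∀ z, g p + 1/(2*σ) * ‖p - a‖^2 ≤ g z + 1/(2*σ) * ‖z - a‖^2) :
    ∀ z, g p ≤ g z + (1/σ) * ⟪p - a, z - p⟫ := by
  intro z
  have h2σ : (2:ℝ) * (1/(2*σ)) = 1/σ := by field_simp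
  have key : ∀ t : ℝ, t ∈ Set.Ioc (0:ℝ) 1 →
      g p ≤ g z + (1/σ) * ⟪p - a, z - p⟫ + t * (1/(2*σ) * ‖z - p‖^2) := by
    intro t ht
    obtain ⟨ht0, ht1⟩ := ht
    have hmin' := hmin (p + t • (z - p))
    have hconv : g (p + t • (z - p)) ≤ (1 - t) * g p + t * g z := by
      have := hg.2 (Set.mem_univ p) (Set.mem_univ z) (by linarith : (0:ℝ) ≤ 1 - t)
        (le_of_lt ht0) (by ring)
      have heq : (1 - t) • p + t • z = p + t • (z - p) := by module
      rw [heq] at this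
      simpa using this
    have hq : ‖p + t • (z - p) - a‖^2
        = ‖p - a‖^2 + 2 * t * ⟪p - a, z - p⟫ + t^2 * ‖z - p‖^2 := by
      have : p + t • (z - p) - a = (p - a) + t • (z - p) := by abel
      rw [this, norm_add_sq_real, real_inner_smul_right, norm_smul]
      simp [mul_pow, abs_of_pos ht0]
      ring
    rw [hq] at hmin'
    rw [← h2σ]
    have h3 : t * g p ≤ t * (g z + 2 * (1/(2*σ)) * ⟪p - a, z - p⟫
        + t * (1/(2*σ) * ‖z - p‖^2)) := by nlinarith [hmin', hconv]
    exact le_of_mul_le_mul_left h3 ht0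
  refine le_of_forall_pos_le_add ?_
  intro ε hε
  set c := 1/(2*σ) * ‖z - p‖^2 with hc
  have hc0 : 0 ≤ c := by positivity
  rcases le_or_gt c 0 with hc' | hc'
  · have := key 1 ⟨one_pos, le_refl 1⟩
    nlinarith
  · set t := min 1 (ε / c) with htdef
    have ht : t ∈ Set.Ioc (0:ℝ) 1 := ⟨lt_min one_pos (by positivity), min_le_left _ _⟩
    have := key t ht
    have htc : t * c ≤ ε := by
      calc t * c ≤ (ε / c) * c := by
            apply mul_le_mul_of_nonneg_right (min_le_right _ _) hc0
        _ = ε := by field_simp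
    linarith

lemma line_deriv {E : Type*} [NormedAddCommGroup E] [InnerProductSpace ℝ E] [CompleteSpace E]
    (f : E → ℝ) (f' : E → E) (hf : ∀ x, HasGradientAt f (f' x) x) (a b : E) (t : ℝ) :
    HasDerivAt (fun s : ℝ => f (a + s • (b - a))) ⟪f' (a + t • (b - a)), b - a⟫ t := by
  have hγ : HasDerivAt (fun s : ℝ => a + s • (b - a)) (b - a) t := by
    simpa using ((hasDerivAt_id t).smul_const (b - a)).const_add a
  have hfd := (hf (a + t • (b - a))).hasFDerivAt
  have := hfd.comp_hasDerivAt t hγ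
  exact this

lemma descent_lemma {E : Type*} [NormedAddCommGroup E] [InnerProductSpace ℝ E] [CompleteSpace E]
    (f : E → ℝ) (f' : E → E) (L : ℝ) (hL : 0 < L)
    (hf : ∀ x, HasGradientAt f (f' x) x)
    (hlip : ∀ x y, ‖f' x - f' y‖ ≤ L * ‖x - y‖) (a b : E) :
    f b ≤ f a + ⟪f' a, b - a⟫ + L/2 * ‖b - a‖^2 := by
  set F : ℝ → ℝ := fun t => f (a + t • (b - a)) - t * ⟪f' a, b - a⟫ - L/2 * t^2 * ‖b - a‖^2
    with hF
  have hder : ∀ t : ℝ, HasDerivAt F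
      (⟪f' (a + t • (b - a)), b - a⟫ - ⟪f' a, b - a⟫ - L * t * ‖b - a‖^2) t := by
    intro t
    have h1 := line_deriv f f' hf a b t
    have h2 : HasDerivAt (fun s : ℝ => s * ⟪f' a, b - a⟫) ⟪f' a, b - a⟫ t := by
      simpa using (hasDerivAt_id t).mul_const ⟪f' a, b - a⟫
    have h3 : HasDerivAt (fun s : ℝ => L/2 * s^2 * ‖b - a‖^2) (L * t * ‖b - a‖^2) t := by
      have := ((hasDerivAt_pow 2 t).const_mul (L/2)).mul_const (‖b - a‖^2)
      exact this.congr_deriv (by rw [show (2:ℕ) - 1 = 1 from rfl]; push_cast; ring)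
    exact (h1.sub h2).sub h3
  have hanti : AntitoneOn F (Set.Icc 0 1) := by
    apply antitoneOn_of_deriv_nonpos (convex_Icc 0 1)
    · exact fun t _ => ((hder t).continuousAt).continuousWithinAt
    · exact fun t _ => ((hder t).differentiableAt).differentiableWithinAt
    · intro t ht
      rw [interior_Icc] at ht
      rw [(hder t).deriv]
      have hineq : ⟪f' (a + t • (b - a)) - f' a, b - a⟫ ≤ L * t * ‖b - a‖^2 := by
        calc ⟪f' (a + t • (b - a)) - f' a, b - a⟫ ≤ ‖f' (a + t • (b - a)) - f' a‖ * ‖b - a‖ :=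
              real_inner_le_norm _ _
          _ ≤ (L * ‖(a + t • (b - a)) - a‖) * ‖b - a‖ := by
              apply mul_le_mul_of_nonneg_right (hlip _ _) (norm_nonneg _)
          _ = L * t * ‖b - a‖^2 := by
              simp [norm_smul, abs_of_pos ht.1]; ring
      rw [inner_sub_left] at hineq
      linarith
  have := hanti (Set.mem_Icc.2 ⟨le_refl 0, zero_le_one⟩) (Set.mem_Icc.2 ⟨zero_le_one, le_refl 1⟩)
    zero_le_one
  simp only [hF] at this
  simp at this
  linarith

lemma convex_grad_ineq {E : Type*} [NormedAddCommGroup E] [InnerProductSpace ℝ E] [CompleteSpace E]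
    (f : E → ℝ) (f' : E → E) (hconv : ConvexOn ℝ Set.univ f)
    (hf : ∀ x, HasGradientAt f (f' x) x) (a z : E) :
    f a + ⟪f' a, z - a⟫ ≤ f z := by
  set g : ℝ → ℝ := fun t => f (a + t • (z - a)) with hg
  have hd : HasDerivAt g ⟪f' a, z - a⟫ 0 := by
    have := line_deriv f f' hf a z 0
    simpa using this
  have hslope : Filter.Tendsto (slope g 0) (nhdsWithin 0 (Set.Ioi 0)) (nhds ⟪f' a, z - a⟫) := by
    have := hasDerivAt_iff_tendsto_slope.1 hd
    exact this.mono_left (nhdsWithin_mono _ (fun t ht => ne_of_gt ht))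
  have hbound : ∀ᶠ t in nhdsWithin 0 (Set.Ioi 0), slope g 0 t ≤ f z - f a := by
    filter_upwards [Ioo_mem_nhdsGT_of_mem (Set.mem_Ico.2 ⟨le_refl 0, one_pos⟩)] with t ht
    obtain ⟨ht0, ht1⟩ := ht
    have hconvt : g t ≤ (1 - t) * f a + t * f z := by
      have := hconv.2 (Set.mem_univ a) (Set.mem_univ z) (by linarith : (0:ℝ) ≤ 1 - t)
        (le_of_lt ht0) (by ring)
      have heq : (1 - t) • a + t • z = a + t • (z - a) := by module
      rw [heq] at this
      simpa using this
    have hg0 : g 0 = f a := by simp [hg]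
    rw [slope_def_field]
    rw [hg0]
    have h2 : (g t - f a) / t ≤ f z - f a := by
      rw [div_le_iff₀ ht0]
      nlinarith
    simpa [div_eq_inv_mul] using h2
  have := le_of_tendsto hslope hbound
  linarith

lemma quad_bound {E : Type*} [NormedAddCommGroup E] [InnerProductSpace ℝ E]
    (σ τ L : ℝ) (hσ : 0 < σ) (hτ : 0 < τ) (hcond : σ * τ < 1 - σ * L) (w z : E) :
    ⟪w, z⟫ ≤ 1/2 * (1/σ) * ‖w‖^2 - L/2 * ‖w‖^2 + 1/2 * (1/τ) * ‖z‖^2 := by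
  have hτle : τ ≤ 1/σ - L := by
    rw [← sub_nonneg]
    have hh : 1/σ - L - τ = (1 - σ*L - σ*τ)/σ := by field_simp
    rw [hh]
    exact div_nonneg (by nlinarith) hσ.le
  have hab : ‖w‖ * ‖z‖ * 2 ≤ τ * ‖w‖^2 + (1/τ) * ‖z‖^2 := by
    have hkey : (τ*‖w‖ - ‖z‖)^2 * (1/τ) = τ*‖w‖^2 - 2*(‖w‖*‖z‖) + (1/τ)*‖z‖^2 := by
      field_simp; ring
    have h0 := mul_nonneg (sq_nonneg (τ*‖w‖ - ‖z‖)) (by positivity : (0:ℝ) ≤ 1/τ)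
    linarith [hkey ▸ h0]
  have h1 : ⟪w, z⟫ ≤ ‖w‖ * ‖z‖ := real_inner_le_norm w z
  have h2 : 0 ≤ (1/σ - L - τ) * ‖w‖^2 :=
    mul_nonneg (by linarith) (sq_nonneg _)
  nlinarith [h2]

lemma V_nonneg {E : Type*} [NormedAddCommGroup E] [InnerProductSpace ℝ E]
    (σ τ : ℝ) (hσ : 0 < σ) (hτ : 0 < τ) (hστ : σ * τ < 1) (w z : E) :
    0 ≤ 1/σ * ‖w‖^2 - 2 * ⟪w, z⟫ + 1/τ * ‖z‖^2 := by
  have hτle : τ ≤ 1/σ := by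
    rw [← sub_nonneg]
    have hh : 1/σ - τ = (1 - σ*τ)/σ := by field_simp
    rw [hh]
    exact div_nonneg (by nlinarith) hσ.le
  have hab : ‖w‖ * ‖z‖ * 2 ≤ τ * ‖w‖^2 + (1/τ) * ‖z‖^2 := by
    have hkey : (τ*‖w‖ - ‖z‖)^2 * (1/τ) = τ*‖w‖^2 - 2*(‖w‖*‖z‖) + (1/τ)*‖z‖^2 := by
      field_simp; ring
    have h0 := mul_nonneg (sq_nonneg (τ*‖w‖ - ‖z‖)) (by positivity : (0:ℝ) ≤ 1/τ)
    linarith [hkey ▸ h0]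
  have h1 : ⟪w, z⟫ ≤ ‖w‖ * ‖z‖ := real_inner_le_norm w z
  have h2 : 0 ≤ (1/σ - τ) * ‖w‖^2 := mul_nonneg (by linarith) (sq_nonneg _)
  nlinarith [h2]

lemma step_core {E : Type*} [NormedAddCommGroup E] [InnerProductSpace ℝ E]
    (σ τ L : ℝ) (hσ : 0 < σ) (hτ : 0 < τ) (hcond : σ * τ < 1 - σ * L)
    (p q xk yk xs ys g : E) (hp hxs fp fxk fxs φq φys : ℝ)
    (h1 : hp ≤ hxs + 1/σ * ⟪p - xk, xs - p⟫ + ⟪yk + g, xs - p⟫)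
    (h2 : φq ≤ φys + 1/τ * ⟪q - yk, ys - q⟫ - ⟪(2:ℕ) • p - xk, ys - q⟫)
    (h3 : fp ≤ fxk + ⟪g, p - xk⟫ + L/2 * ‖p - xk‖^2)
    (h4 : fxk + ⟪g, xs - xk⟫ ≤ fxs) :
    fp + hp + φq - (fxs + hxs + φys) - (⟪xs - p, ys⟫ - ⟪ys - q, xs⟫) ≤
      1/2 * ((1/σ * ‖xk - xs‖^2 - 2 * ⟪xk - xs, yk - ys⟫ + 1/τ * ‖yk - ys‖^2)
           - (1/σ * ‖p - xs‖^2 - 2 * ⟪p - xs, q - ys⟫ + 1/τ * ‖q - ys‖^2)) := by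
  set u := p - xs with hu
  set u0 := xk - xs with hu0
  set v := q - ys with hv
  set v0 := yk - ys with hv0
  have hi := quad_bound σ τ L hσ hτ hcond (u - u0) (v - v0)
  have E1 : ⟪p - xk, xs - p⟫ = ⟪u, u0⟫ - ‖u‖^2 := by
    rw [show p - xk = u - u0 by rw [hu, hu0]; abel, show xs - p = -u by rw [hu]; abel]
    simp only [inner_sub_left, inner_neg_right, real_inner_self_eq_norm_sq]
    linarith [real_inner_comm u0 u]
  have E2 : ⟪yk + g, xs - p⟫ = -(⟪u, v0⟫ + ⟪u, ys⟫ + ⟪g, u⟫) := by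
    rw [show yk + g = v0 + ys + g by rw [hv0]; abel, show xs - p = -u by rw [hu]; abel]
    simp only [inner_add_left, inner_neg_right]
    linarith [real_inner_comm v0 u, real_inner_comm ys u]
  have E3 : ⟪q - yk, ys - q⟫ = ⟪v, v0⟫ - ‖v‖^2 := by
    rw [show q - yk = v - v0 by rw [hv, hv0]; abel, show ys - q = -v by rw [hv]; abel]
    simp only [inner_sub_left, inner_neg_right, real_inner_self_eq_norm_sq]
    linarith [real_inner_comm v0 v]
  have E4 : ⟪(2:ℕ) • p - xk, ys - q⟫ = -(2 * ⟪u, v⟫ + ⟪v, xs⟫ - ⟪u0, v⟫) := by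
    rw [show (2:ℕ) • p - xk = 2•u - u0 + xs by rw [hu, hu0]; push_cast [two_smul]; abel,
      show ys - q = -v by rw [hv]; abel]
    simp only [inner_sub_left, inner_add_left, inner_neg_right, two_smul]
    linarith [real_inner_comm xs v]
  have E5 : ⟪g, p - xk⟫ = ⟪g, u⟫ - ⟪g, u0⟫ := by
    rw [show p - xk = u - u0 by rw [hu, hu0]; abel, inner_sub_right]
  have E6 : ⟪g, xs - xk⟫ = -⟪g, u0⟫ := by
    rw [show xs - xk = -u0 by rw [hu0]; abel, inner_neg_right]
  have E7 : ‖p - xk‖^2 = ‖u‖^2 - 2*⟪u, u0⟫ + ‖u0‖^2 := by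
    rw [show p - xk = u - u0 by rw [hu, hu0]; abel, norm_sub_sq_real]
  have E9 : ⟪xs - p, ys⟫ = -⟪u, ys⟫ := by
    rw [show xs - p = -u by rw [hu]; abel, inner_neg_left]
  have E10 : ⟪ys - q, xs⟫ = -⟪v, xs⟫ := by
    rw [show ys - q = -v by rw [hv]; abel, inner_neg_left]
  have E11 : ⟪xk - xs, yk - ys⟫ = ⟪u0, v0⟫ := rfl
  have E15 : ⟪p - xs, q - ys⟫ = ⟪u, v⟫ := rfl
  have hiexp : ⟪u, v⟫ - ⟪u, v0⟫ - ⟪u0, v⟫ + ⟪u0, v0⟫ ≤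
      1/2 * (1/σ) * (‖u‖^2 - 2*⟪u, u0⟫ + ‖u0‖^2) - L/2 * (‖u‖^2 - 2*⟪u, u0⟫ + ‖u0‖^2)
      + 1/2 * (1/τ) * (‖v‖^2 - 2*⟪v, v0⟫ + ‖v0‖^2) := by
    rw [← norm_sub_sq_real, ← norm_sub_sq_real]
    rw [show ⟪u,v⟫ - ⟪u,v0⟫ - ⟪u0,v⟫ + ⟪u0,v0⟫ = ⟪u - u0, v - v0⟫ by
      simp only [inner_sub_left, inner_sub_right]; ring]
    exact hi
  rw [E1, E2] at h1
  rw [E3, E4] at h2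
  rw [E5, E7] at h3
  rw [E6] at h4
  rw [E9, E10, E11, E15]
  linarith [h1, h2, h3, h4, hiexp]

theorem stmt_14 {E : Type*} [NormedAddCommGroup E] [InnerProductSpace ℝ E] [CompleteSpace E]
    (f₁ h φ : E → ℝ) (f₁' : E → E) (L : ℝ) (hL : 0 < L)
    (hf₁conv : ConvexOn ℝ Set.univ f₁)
    (hf₁diff : ∀ x, HasGradientAt f₁ (f₁' x) x)
    (hf₁lip : ∀ x y, ‖f₁' x - f₁' y‖ ≤ L * ‖x - y‖)
    (hhconv : ConvexOn ℝ Set.univ h)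
    (hφconv : ConvexOn ℝ Set.univ φ)
    (σ τ : ℝ) (hσ : 0 < σ) (hτ : 0 < τ) (hcond : σ * τ < 1 - σ * L)
    (x y xhat : ℕ → E)
    (hxhat : ∀ k, ∀ z : E,
      h (xhat (k + 1)) +
          1 / (2 * σ) * ‖xhat (k + 1) - (x k - σ • (y k + f₁' (x k)))‖ ^ 2 ≤
      h z + 1 / (2 * σ) * ‖z - (x k - σ • (y k + f₁' (x k)))‖ ^ 2)
    (hy : ∀ k, ∀ w : E,
      φ (y (k + 1)) +
          1 / (2 * τ) * ‖y (k + 1) - (y k + τ • (2 • xhat (k + 1) - x k))‖ ^ 2 ≤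
      φ w + 1 / (2 * τ) * ‖w - (y k + τ • (2 • xhat (k + 1) - x k))‖ ^ 2)
    (hx : ∀ k, x (k + 1) = xhat (k + 1))
    (xs ys : E)
    (hsaddle : ∀ a b : E,
      f₁ xs + h xs + ⟪xs, b⟫ - φ b ≤ f₁ xs + h xs + ⟪xs, ys⟫ - φ ys ∧
      f₁ xs + h xs + ⟪xs, ys⟫ - φ ys ≤ f₁ a + h a + ⟪a, ys⟫ - φ ys) :
    ∀ N : ℕ, 1 ≤ N →
      (f₁ ((N : ℝ)⁻¹ • ∑ k ∈ Finset.Icc 1 N, xhat k)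
          + h ((N : ℝ)⁻¹ • ∑ k ∈ Finset.Icc 1 N, xhat k)
          + φ ((N : ℝ)⁻¹ • ∑ k ∈ Finset.Icc 1 N, y k))
        - (f₁ xs + h xs + φ ys)
        - (⟪xs - (N : ℝ)⁻¹ • ∑ k ∈ Finset.Icc 1 N, xhat k, ys⟫
            - ⟪ys - (N : ℝ)⁻¹ • ∑ k ∈ Finset.Icc 1 N, y k, xs⟫) ≤
      1 / (2 * N) *
        ((1 / σ) * ‖x 0 - xs‖ ^ 2 - 2 * ⟪x 0 - xs, y 0 - ys⟫ + (1 / τ) * ‖y 0 - ys‖ ^ 2) := by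
  intro N hN
  set V : ℕ → ℝ := fun k =>
    1/σ * ‖x k - xs‖^2 - 2 * ⟪x k - xs, y k - ys⟫ + 1/τ * ‖y k - ys‖^2 with hVdef
  -- per-step inequality
  have step : ∀ k : ℕ,
      f₁ (xhat (k+1)) + h (xhat (k+1)) + φ (y (k+1)) - (f₁ xs + h xs + φ ys)
        - (⟪xs - xhat (k+1), ys⟫ - ⟪ys - y (k+1), xs⟫) ≤ 1/2 * (V k - V (k+1)) := by
    intro k
    -- h-prox inequality
    have hprox1 := prox_subgrad h hhconv σ hσ (xhat (k+1))
      (x k - σ • (y k + f₁' (x k))) (hxhat k) xs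
    have e1 : xhat (k+1) - (x k - σ • (y k + f₁' (x k)))
        = (xhat (k+1) - x k) + σ • (y k + f₁' (x k)) := by abel
    rw [e1, inner_add_left, real_inner_smul_left] at hprox1
    have efs1 : 1/σ * (⟪xhat (k+1) - x k, xs - xhat (k+1)⟫
          + σ * ⟪y k + f₁' (x k), xs - xhat (k+1)⟫)
        = 1/σ * ⟪xhat (k+1) - x k, xs - xhat (k+1)⟫
          + ⟪y k + f₁' (x k), xs - xhat (k+1)⟫ := by
      field_simp
    have h1 : h (xhat (k+1)) ≤ h xs + 1/σ * ⟪xhat (k+1) - x k, xs - xhat (k+1)⟫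
        + ⟪y k + f₁' (x k), xs - xhat (k+1)⟫ := by linarith [hprox1, efs1]
    -- φ-prox inequality
    have hprox2 := prox_subgrad φ hφconv τ hτ (y (k+1))
      (y k + τ • (2 • xhat (k+1) - x k)) (hy k) ys
    have e2 : y (k+1) - (y k + τ • (2 • xhat (k+1) - x k))
        = (y (k+1) - y k) - τ • (2 • xhat (k+1) - x k) := by abel
    rw [e2, inner_sub_left, real_inner_smul_left] at hprox2
    have efs2 : 1/τ * (⟪y (k+1) - y k, ys - y (k+1)⟫
          - τ * ⟪2 • xhat (k+1) - x k, ys - y (k+1)⟫)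
        = 1/τ * ⟪y (k+1) - y k, ys - y (k+1)⟫
          - ⟪2 • xhat (k+1) - x k, ys - y (k+1)⟫ := by
      field_simp
    have h2 : φ (y (k+1)) ≤ φ ys + 1/τ * ⟪y (k+1) - y k, ys - y (k+1)⟫
        - ⟪(2:ℕ) • xhat (k+1) - x k, ys - y (k+1)⟫ := by linarith [hprox2, efs2]
    have h3 := descent_lemma f₁ f₁' L hL hf₁diff hf₁lip (x k) (xhat (k+1))
    have h4 := convex_grad_ineq f₁ f₁' hf₁conv hf₁diff (x k) xs
    have hVk : V k = 1/σ * ‖x k - xs‖^2 - 2 * ⟪x k - xs, y k - ys⟫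
        + 1/τ * ‖y k - ys‖^2 := rfl
    have hVk1 : V (k+1) = 1/σ * ‖xhat (k+1) - xs‖^2
        - 2 * ⟪xhat (k+1) - xs, y (k+1) - ys⟫ + 1/τ * ‖y (k+1) - ys‖^2 := by
      rw [hVdef]; simp only [hx k]
    rw [hVk, hVk1]
    exact step_core σ τ L hσ hτ hcond (xhat (k+1)) (y (k+1)) (x k) (y k) xs ys
      (f₁' (x k)) _ _ _ _ _ _ _ h1 h2 h3 h4
  -- telescoping sum
  have hsum : ∑ k ∈ Finset.range N,
      (f₁ (xhat (k+1)) + h (xhat (k+1)) + φ (y (k+1)) - (f₁ xs + h xs + φ ys)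
        - (⟪xs - xhat (k+1), ys⟫ - ⟪ys - y (k+1), xs⟫)) ≤ 1/2 * (V 0 - V N) := by
    calc ∑ k ∈ Finset.range N,
        (f₁ (xhat (k+1)) + h (xhat (k+1)) + φ (y (k+1)) - (f₁ xs + h xs + φ ys)
          - (⟪xs - xhat (k+1), ys⟫ - ⟪ys - y (k+1), xs⟫))
        ≤ ∑ k ∈ Finset.range N, 1/2 * (V k - V (k+1)) :=
          Finset.sum_le_sum (fun k _ => step k)
      _ = 1/2 * ∑ k ∈ Finset.range N, (V k - V (k+1)) := by rw [Finset.mul_sum]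
      _ = 1/2 * (V 0 - V N) := by rw [Finset.sum_range_sub' V N]
  have hVN : 0 ≤ V N :=
    V_nonneg σ τ hσ hτ (by nlinarith [mul_pos hσ hL]) _ _
  have hV0 : V 0 = 1/σ * ‖x 0 - xs‖^2 - 2 * ⟪x 0 - xs, y 0 - ys⟫
      + 1/τ * ‖y 0 - ys‖^2 := rfl
  clear_value V
  -- reindex
  set G : ℕ → ℝ := fun k => f₁ (xhat k) + h (xhat k) + φ (y k) - (f₁ xs + h xs + φ ys)
    - (⟪xs - xhat k, ys⟫ - ⟪ys - y k, xs⟫) with hGdef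
  have hreidx : ∑ k ∈ Finset.Icc 1 N, G k = ∑ k ∈ Finset.range N, G (k+1) := by
    rw [← Finset.Ico_add_one_right_eq_Icc, Finset.sum_Ico_eq_sum_range]
    exact Finset.sum_congr (by simp) (fun k _ => by rw [add_comm])
  have hSle : ∑ k ∈ Finset.Icc 1 N, G k ≤ 1/2 * V 0 := by
    rw [hreidx]
    calc ∑ k ∈ Finset.range N, G (k+1) ≤ 1/2 * (V 0 - V N) := hsum
      _ ≤ 1/2 * V 0 := by linarith
  -- cardinality and positivity facts
  have hNpos : (0:ℝ) < N := by exact_mod_cast Nat.lt_of_lt_of_le Nat.zero_lt_one hN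
  have hNne : (N:ℝ) ≠ 0 := ne_of_gt hNpos
  have hcard : (Finset.Icc 1 N).card = N := by rw [Nat.card_Icc]; omega
  have hwsum : ∑ _k ∈ Finset.Icc 1 N, (N:ℝ)⁻¹ = 1 := by
    rw [Finset.sum_const, hcard, nsmul_eq_mul]
    field_simp
  -- Jensen
  have hJ1 : f₁ ((N:ℝ)⁻¹ • ∑ k ∈ Finset.Icc 1 N, xhat k)
      ≤ (N:ℝ)⁻¹ * ∑ k ∈ Finset.Icc 1 N, f₁ (xhat k) := by
    have := hf₁conv.map_sum_le (t := Finset.Icc 1 N) (w := fun _ => (N:ℝ)⁻¹)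
      (p := fun k => xhat k) (fun _ _ => by positivity) hwsum (fun _ _ => Set.mem_univ _)
    rw [← Finset.smul_sum] at this
    simpa [smul_eq_mul, Finset.mul_sum] using this
  have hJ2 : h ((N:ℝ)⁻¹ • ∑ k ∈ Finset.Icc 1 N, xhat k)
      ≤ (N:ℝ)⁻¹ * ∑ k ∈ Finset.Icc 1 N, h (xhat k) := by
    have := hhconv.map_sum_le (t := Finset.Icc 1 N) (w := fun _ => (N:ℝ)⁻¹)
      (p := fun k => xhat k) (fun _ _ => by positivity) hwsum (fun _ _ => Set.mem_univ _)
    rw [← Finset.smul_sum] at this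
    simpa [smul_eq_mul, Finset.mul_sum] using this
  have hJ3 : φ ((N:ℝ)⁻¹ • ∑ k ∈ Finset.Icc 1 N, y k)
      ≤ (N:ℝ)⁻¹ * ∑ k ∈ Finset.Icc 1 N, φ (y k) := by
    have := hφconv.map_sum_le (t := Finset.Icc 1 N) (w := fun _ => (N:ℝ)⁻¹)
      (p := fun k => y k) (fun _ _ => by positivity) hwsum (fun _ _ => Set.mem_univ _)
    rw [← Finset.smul_sum] at this
    simpa [smul_eq_mul, Finset.mul_sum] using this
  -- linear terms
  have hL1 : ⟪xs - (N:ℝ)⁻¹ • ∑ k ∈ Finset.Icc 1 N, xhat k, ys⟫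
      = ⟪xs, ys⟫ - (N:ℝ)⁻¹ * ∑ k ∈ Finset.Icc 1 N, ⟪xhat k, ys⟫ := by
    rw [inner_sub_left, real_inner_smul_left, sum_inner]
  have hL2 : ⟪ys - (N:ℝ)⁻¹ • ∑ k ∈ Finset.Icc 1 N, y k, xs⟫
      = ⟪ys, xs⟫ - (N:ℝ)⁻¹ * ∑ k ∈ Finset.Icc 1 N, ⟪y k, xs⟫ := by
    rw [inner_sub_left, real_inner_smul_left, sum_inner]
  -- expansion of the sum of gaps
  have hSexp : ∑ k ∈ Finset.Icc 1 N, G k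
      = ∑ k ∈ Finset.Icc 1 N, f₁ (xhat k) + ∑ k ∈ Finset.Icc 1 N, h (xhat k)
        + ∑ k ∈ Finset.Icc 1 N, φ (y k) - (N:ℝ) * (f₁ xs + h xs + φ ys)
        - (((N:ℝ) * ⟪xs, ys⟫ - ∑ k ∈ Finset.Icc 1 N, ⟪xhat k, ys⟫)
          - ((N:ℝ) * ⟪ys, xs⟫ - ∑ k ∈ Finset.Icc 1 N, ⟪y k, xs⟫)) := by
    rw [hGdef]
    simp only [inner_sub_left, Finset.sum_sub_distrib, Finset.sum_add_distrib,
      Finset.sum_const, hcard, nsmul_eq_mul]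
    ring
  have hfin : (N:ℝ)⁻¹ * ∑ k ∈ Finset.Icc 1 N, G k
      = ((N:ℝ)⁻¹ * ∑ k ∈ Finset.Icc 1 N, f₁ (xhat k)
        + (N:ℝ)⁻¹ * ∑ k ∈ Finset.Icc 1 N, h (xhat k)
        + (N:ℝ)⁻¹ * ∑ k ∈ Finset.Icc 1 N, φ (y k))
        - (f₁ xs + h xs + φ ys)
        - ((⟪xs, ys⟫ - (N:ℝ)⁻¹ * ∑ k ∈ Finset.Icc 1 N, ⟪xhat k, ys⟫)
          - (⟪ys, xs⟫ - (N:ℝ)⁻¹ * ∑ k ∈ Finset.Icc 1 N, ⟪y k, xs⟫)) := by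
    rw [hSexp]
    field_simp
  -- conclude
  have main1 : (f₁ ((N:ℝ)⁻¹ • ∑ k ∈ Finset.Icc 1 N, xhat k)
          + h ((N:ℝ)⁻¹ • ∑ k ∈ Finset.Icc 1 N, xhat k)
          + φ ((N:ℝ)⁻¹ • ∑ k ∈ Finset.Icc 1 N, y k))
        - (f₁ xs + h xs + φ ys)
        - (⟪xs - (N:ℝ)⁻¹ • ∑ k ∈ Finset.Icc 1 N, xhat k, ys⟫
            - ⟪ys - (N:ℝ)⁻¹ • ∑ k ∈ Finset.Icc 1 N, y k, xs⟫)
      ≤ (N:ℝ)⁻¹ * ∑ k ∈ Finset.Icc 1 N, G k := by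
    rw [hL1, hL2, hfin]
    linarith [hJ1, hJ2, hJ3]
  have main2 : (N:ℝ)⁻¹ * ∑ k ∈ Finset.Icc 1 N, G k ≤ (N:ℝ)⁻¹ * (1/2 * V 0) :=
    mul_le_mul_of_nonneg_left hSle (by positivity)
  have main3 : (N:ℝ)⁻¹ * (1/2 * V 0)
      = 1 / (2 * N) * ((1/σ) * ‖x 0 - xs‖^2 - 2 * ⟪x 0 - xs, y 0 - ys⟫
        + (1/τ) * ‖y 0 - ys‖^2) := by
    rw [hV0]
    field_simp
  linarith [main1, main2, main3 ▸ main2]
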